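/- For a real number t with 0 < t < 1 and an integer r ≥ 1, the coefficient of u^r in the power series (1-u)^{-t}, namely t(t+1)···(t+r-1)/r!, is at most t·e^t·r^{t-1}. -/

import Mathlib

/-- The coefficient of `u^r` in `(1-u)^{-t}`, namely `t(t+1)⋯(t+r-1)/r!`, is at
most `t e^t r^{t-1}`. -/
theorem stmt4 (t : ℝ) (ht0 : 0 < t) (ht1 : t < 1) (r : ℕ) (hr : 1 ≤ r) :
    (∏ i ∈ Finset.range r, (t + i)) / (Nat.factorial r) ≤
      t * Real.exp t * (r : ℝ) ^ (t - 1) := by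
  obtain ⟨n, rfl⟩ : ∃ n, r = n + 1 := ⟨r - 1, (Nat.succ_pred_eq_of_pos hr).symm⟩
  have hpos : (0 : ℝ) < (n : ℝ) + 1 := by positivity
  -- factorial of n as a product
  have hfac : (Nat.factorial n : ℝ) = ∏ i ∈ Finset.range n, ((i : ℝ) + 1) := by
    rw [← Finset.prod_range_add_one_eq_factorial]
    push_cast
    exact Finset.prod_congr rfl fun i _ => by ring
  -- key product bound
  have hP : (∏ i ∈ Finset.range n, (t + ((i : ℝ) + 1))) ≤
      (Nat.factorial n : ℝ) * Real.exp (t * (harmonic n : ℝ)) := by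
    calc (∏ i ∈ Finset.range n, (t + ((i : ℝ) + 1)))
        ≤ ∏ i ∈ Finset.range n, (((i : ℝ) + 1) * Real.exp (t / ((i : ℝ) + 1))) := by
          refine Finset.prod_le_prod (fun i _ => by positivity) (fun i _ => ?_)
          have hi : (0 : ℝ) < (i : ℝ) + 1 := by positivity
          have := Real.add_one_le_exp (t / ((i : ℝ) + 1))
          calc t + ((i : ℝ) + 1) = ((i : ℝ) + 1) * (t / ((i : ℝ) + 1) + 1) := by
                field_simp
            _ ≤ ((i : ℝ) + 1) * Real.exp (t / ((i : ℝ) + 1)) := by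
                exact mul_le_mul_of_nonneg_left this hi.le
      _ = (Nat.factorial n : ℝ) * Real.exp (t * (harmonic n : ℝ)) := by
          rw [Finset.prod_mul_distrib, ← Real.exp_sum, hfac]
          congr 1
          congr 1
          rw [harmonic]
          push_cast
          rw [Finset.mul_sum]
          refine Finset.sum_congr rfl (fun i _ => ?_)
          rw [div_eq_mul_inv]
  have hharm : (harmonic n : ℝ) ≤ 1 + Real.log ((n : ℝ) + 1) := by
    refine (harmonic_le_one_add_log n).trans (add_le_add_right ?_ 1)
    rcases Nat.eq_zero_or_pos n with h | h
    · simp [h]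
    · exact Real.log_le_log (by positivity) (by linarith)
  have hexp : Real.exp (t * (harmonic n : ℝ)) ≤ Real.exp t * ((n : ℝ) + 1) ^ t := by
    have : Real.exp (t * (harmonic n : ℝ)) ≤ Real.exp (t * (1 + Real.log ((n : ℝ) + 1))) :=
      Real.exp_le_exp.mpr (mul_le_mul_of_nonneg_left hharm ht0.le)
    refine this.trans_eq ?_
    rw [Real.rpow_def_of_pos hpos, ← Real.exp_add]
    ring_nf
  have hrpow : ((n : ℝ) + 1) ^ (t - 1) * ((n : ℝ) + 1) = ((n : ℝ) + 1) ^ t := by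
    rw [← Real.rpow_add_one hpos.ne' (t - 1)]
    norm_num
  rw [div_le_iff₀ (by positivity : (0 : ℝ) < (Nat.factorial (n + 1) : ℝ))]
  have hfac' : (Nat.factorial (n + 1) : ℝ) = ((n : ℝ) + 1) * (Nat.factorial n : ℝ) := by
    rw [Nat.factorial_succ]; push_cast; ring
  rw [Finset.prod_range_succ']
  push_cast
  calc (∏ i ∈ Finset.range n, (t + ((i : ℝ) + 1))) * (t + 0)
      ≤ ((Nat.factorial n : ℝ) * Real.exp (t * (harmonic n : ℝ))) * t := by
        rw [add_zero]
        exact mul_le_mul_of_nonneg_right hP ht0.le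
    _ ≤ ((Nat.factorial n : ℝ) * (Real.exp t * ((n : ℝ) + 1) ^ t)) * t := by
        have := mul_le_mul_of_nonneg_left hexp
          (by positivity : (0 : ℝ) ≤ (Nat.factorial n : ℝ))
        exact mul_le_mul_of_nonneg_right this ht0.le
    _ = t * Real.exp t * (((n : ℝ) + 1) ^ (t - 1) * ((n : ℝ) + 1)) *
          (Nat.factorial n : ℝ) := by rw [hrpow]; ring
    _ = t * Real.exp t * ((n : ℝ) + 1) ^ (t - 1) * (Nat.factorial (n + 1) : ℝ) := by
        rw [hfac']; ring
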